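/- If the holomorphic triple (E₁, E₂, 0) with zero morphism is q'-semistable, then q' = P_{E₂}/r₂; in particular, applying the q'-semistability inequality to the subtriples (0, E₂', 0) and (E₁, E₂', 0) for a proper subsheaf E₂' ⊂ E₂ yields P_{E₂'}/r₂' < q' ≤ P_{E₂/E₂'}/(r₂ − r₂'), forcing E₂ to be semistable, and the analogous argument for E₁ forces E₁ to be semistable. Moreover such a triple can never be q'-stable. -/

import Mathlib

/-- Let `(E₁, E₂, 0)` be a holomorphic triple with zero morphism.
Subsheaves of `E₁` (resp. `E₂`) are modelled by index types `ι₁` (resp. `ι₂`)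
carrying rank and Hilbert-polynomial functions, with distinguished elements `bot`
(the zero subsheaf) and `top` (the whole sheaf); torsion-freeness means nonzero
subsheaves have positive rank. Subtriples of `(E₁, E₂, 0)` are arbitrary pairs
`(a, b)`, nontrivial if not both zero and not both the full sheaf. If the triple is
`q'`-semistable (`Θ_{q'} ≤ 0` on all nontrivial subtriples), then `q' = P_{E₂}/r₂`,
`E₂` is semistable, `E₁` is semistable, and the triple can never be `q'`-stable
(`Θ_{q'} < 0` fails for some nontrivial subtriple). -/
theorem stmt3 {F : Type*} [Field F] [LinearOrder F] [IsStrictOrderedRing F] {ι₁ ι₂ : Type*}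
    (rk₁ Pf₁ : ι₁ → F) (rk₂ Pf₂ : ι₂ → F)
    (bot₁ top₁ : ι₁) (bot₂ top₂ : ι₂)
    (r₁ r₂ P₁ P₂ q' : F) (hr₁ : 0 < r₁) (hr₂ : 0 < r₂)
    (hb₁ : rk₁ bot₁ = 0) (hPb₁ : Pf₁ bot₁ = 0) (ht₁ : rk₁ top₁ = r₁) (hPt₁ : Pf₁ top₁ = P₁)
    (hb₂ : rk₂ bot₂ = 0) (hPb₂ : Pf₂ bot₂ = 0) (ht₂ : rk₂ top₂ = r₂) (hPt₂ : Pf₂ top₂ = P₂)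
    (hpos₁ : ∀ a, a ≠ bot₁ → 0 < rk₁ a) (hpos₂ : ∀ b, b ≠ bot₂ → 0 < rk₂ b)
    (hle₁ : ∀ a, rk₁ a ≤ r₁) (hle₂ : ∀ b, rk₂ b ≤ r₂)
    (Θ : ι₁ → ι₂ → F)
    (hΘ : ∀ a b, Θ a b =
      ((Pf₁ a + Pf₂ b) / (rk₁ a + rk₂ b) - q')
        - (rk₁ a / (rk₁ a + rk₂ b)) * ((r₁ + r₂) / r₁) * ((P₁ + P₂) / (r₁ + r₂) - q'))
    (hss : ∀ a b, ¬(a = bot₁ ∧ b = bot₂) → ¬(a = top₁ ∧ b = top₂) → Θ a b ≤ 0) :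
    q' = P₂ / r₂ ∧
    (∀ b, b ≠ bot₂ → b ≠ top₂ → Pf₂ b / rk₂ b ≤ P₂ / r₂) ∧
    (∀ a, a ≠ bot₁ → a ≠ top₁ → Pf₁ a / rk₁ a ≤ P₁ / r₁) ∧
    ¬(∀ a b, ¬(a = bot₁ ∧ b = bot₂) → ¬(a = top₁ ∧ b = top₂) → Θ a b < 0) := by

  have hbt : bot₁ ≠ top₁ := by
    intro h; rw [h, ht₁] at hb₁; exact absurd hb₁ (ne_of_lt hr₁).symm
  have hbt2 : bot₂ ≠ top₂ := by
    intro h; rw [h, ht₂] at hb₂; exact absurd hb₂ (ne_of_lt hr₂).symm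
  -- Θ(bot₁, top₂) = P₂/r₂ - q'
  have hbtval : Θ bot₁ top₂ = P₂ / r₂ - q' := by
    rw [hΘ, hb₁, hPb₁, ht₂, hPt₂]
    field_simp
    ring
  have h1 : P₂ / r₂ - q' ≤ 0 := by
    have := hss bot₁ top₂ (fun h => hbt2 h.2.symm) (fun h => hbt h.1)
    rwa [hbtval] at this
  have hr12 : (0:F) < r₁ + r₂ := by linarith
  have h2 : q' ≤ P₂ / r₂ := by
    have h := hss top₁ bot₂ (fun h => hbt h.1.symm) (fun h => hbt2 h.2)
    rw [hΘ, ht₁, hPt₁, hb₂, hPb₂] at h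
    rw [add_zero, add_zero] at h
    have key : P₁ / r₁ - q' - r₁ / r₁ * ((r₁ + r₂) / r₁) * ((P₁ + P₂) / (r₁ + r₂) - q')
        = (r₂ * q' - P₂) / r₁ := by field_simp; ring
    rw [key, div_nonpos_iff] at h
    rw [le_div_iff₀ hr₂]
    rcases h with ⟨h3, h4⟩ | ⟨h3, h4⟩
    · linarith
    · nlinarith
  have hq : q' = P₂ / r₂ := le_antisymm h2 (by linarith)
  refine ⟨hq, ?_, ?_, ?_⟩
  · intro b hb hbtop
    have hrb := hpos₂ b hb
    have h := hss bot₁ b (fun h => hb h.2) (fun h => hbt h.1)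
    rw [hΘ, hb₁, hPb₁] at h
    simp only [zero_add, zero_div, zero_mul, sub_zero] at h
    rw [hq] at h
    linarith [h]
  · intro a ha hatop
    have hra := hpos₁ a ha
    have h := hss a top₂ (fun h => ha h.1) (fun h => hatop h.1)
    rw [hΘ, ht₂, hPt₂, hq] at h
    have hs2 : (0:F) < rk₁ a + r₂ := by linarith
    rw [div_le_div_iff₀ hra hr₁]
    have key : (Pf₁ a + P₂) / (rk₁ a + r₂) - P₂ / r₂
        - rk₁ a / (rk₁ a + r₂) * ((r₁ + r₂) / r₁) * ((P₁ + P₂) / (r₁ + r₂) - P₂ / r₂)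
        = (Pf₁ a * r₁ - P₁ * rk₁ a) / ((rk₁ a + r₂) * r₁) := by
      field_simp
      ring
    rw [key] at h
    have := (div_nonpos_iff.mp h)
    rcases this with ⟨h3, h4⟩ | ⟨h3, h4⟩
    · nlinarith [mul_pos hs2 hr₁]
    · linarith
  · intro hst
    have := hst bot₁ top₂ (fun h => hbt2 h.2.symm) (fun h => hbt h.1)
    rw [hbtval, hq] at this
    simp at this
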